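/- Let B ∈ ℝ^{n×(m−p)}, C ∈ ℝ^{n×p}, x₀, x_goal ∈ ℝⁿ, ε ≥ 0, and define g(h) := ‖Cᵀh‖ − ‖Bᵀh‖ for unit vectors h ∈ ℝⁿ. If the maximum of g over the unit sphere is strictly positive, then there exists a time t_lim ≥ 0 such that for all t > t_lim the target ball G = {x ∈ ℝⁿ : ‖x − x_goal‖ ≤ ε} is not resiliently reachable at time t from x₀. -/

import Mathlib

open MeasureTheory Matrix

/-- Euclidean norm of a vector in `ℝ^k`. -/
noncomputable def eNorm {k : ℕ} (v : Fin k → ℝ) : ℝ := Real.sqrt (∑ i, (v i) ^ 2)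

/-- A square-integrable signal on `[0,T]` with `L²` norm at most `1`. -/
def Admissible {k : ℕ} (T : ℝ) (f : ℝ → Fin k → ℝ) : Prop :=
  Measurable f ∧ IntegrableOn (fun t => (eNorm (f t)) ^ 2) (Set.Ioc 0 T) ∧
    (∫ t in Set.Ioc (0 : ℝ) T, (eNorm (f t)) ^ 2) ≤ 1

/-- The target ball of center `xgoal` and radius `ε` is resiliently reachable at time `T`
from `x₀` for the driftless system `ẋ = Bu + Cw`. -/
def ResilientlyReachableAt {n q p : ℕ} (B : Matrix (Fin n) (Fin q) ℝ)
    (C : Matrix (Fin n) (Fin p) ℝ) (x₀ xgoal : Fin n → ℝ) (ε T : ℝ) : Prop :=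
  ∀ w : ℝ → Fin p → ℝ, Admissible T w →
    ∃ u : ℝ → Fin q → ℝ, Admissible T u ∧
      eNorm ((x₀ + ∫ t in Set.Ioc (0 : ℝ) T, (B.mulVec (u t) + C.mulVec (w t))) - xgoal) ≤ ε

lemma eNorm_nonneg {k : ℕ} (v : Fin k → ℝ) : 0 ≤ eNorm v := Real.sqrt_nonneg _

lemma sq_eNorm {k : ℕ} (v : Fin k → ℝ) : eNorm v ^ 2 = ∑ i, (v i) ^ 2 :=
  Real.sq_sqrt (Finset.sum_nonneg fun _ _ => sq_nonneg _)

lemma abs_le_eNorm {k : ℕ} (v : Fin k → ℝ) (i : Fin k) : |v i| ≤ eNorm v := by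
  rw [← Real.sqrt_sq_eq_abs]
  exact Real.sqrt_le_sqrt (Finset.single_le_sum (fun j _ => sq_nonneg (v j)) (Finset.mem_univ i))

lemma pi_norm_le_eNorm {k : ℕ} (v : Fin k → ℝ) : ‖v‖ ≤ eNorm v := by
  refine (pi_norm_le_iff_of_nonneg (eNorm_nonneg v)).2 fun i => ?_
  simpa [Real.norm_eq_abs] using abs_le_eNorm v i

lemma abs_dot_le {k : ℕ} (a b : Fin k → ℝ) : |∑ i, a i * b i| ≤ eNorm a * eNorm b := by
  have := abs_real_inner_le_norm (F := EuclideanSpace ℝ (Fin k))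
    ((WithLp.equiv 2 (Fin k → ℝ)).symm a) ((WithLp.equiv 2 (Fin k → ℝ)).symm b)
  have hn : ∀ v : Fin k → ℝ, ‖(WithLp.equiv 2 (Fin k → ℝ)).symm v‖ = eNorm v := by
    intro v
    rw [EuclideanSpace.norm_eq]
    simp [eNorm, Real.norm_eq_abs, sq_abs]
  rw [hn, hn] at this
  simpa [PiLp.inner_apply, RCLike.inner_apply, conj_trivial, mul_comm] using this

lemma le_half {a x : ℝ} (ha : 0 < a) : x ≤ (a * x ^ 2 + 1 / a) / 2 := by
  rw [le_div_iff₀ (by norm_num : (0:ℝ) < 2)]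
  have h1 : a * (1/a) = 1 := by field_simp
  nlinarith [sq_nonneg (a * x - 1), sq_nonneg x, ha]

noncomputable def dotCLM {k : ℕ} (h : Fin k → ℝ) : (Fin k → ℝ) →L[ℝ] ℝ :=
  ∑ i, h i • (ContinuousLinearMap.proj i : (Fin k → ℝ) →L[ℝ] ℝ)

lemma dotCLM_apply {k : ℕ} (h v : Fin k → ℝ) : dotCLM h v = ∑ i, h i * v i := by
  simp [dotCLM, ContinuousLinearMap.sum_apply]

lemma dot_mulVec {n q : ℕ} (h : Fin n → ℝ) (M : Matrix (Fin n) (Fin q) ℝ) (z : Fin q → ℝ) :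
    ∑ i, h i * (M.mulVec z) i = ∑ j, (Mᵀ.mulVec h) j * z j := by
  simp only [Matrix.mulVec, dotProduct, Matrix.transpose_apply, Finset.mul_sum,
    Finset.sum_mul]
  rw [Finset.sum_comm]
  exact Finset.sum_congr rfl fun j _ => Finset.sum_congr rfl fun i _ => by ring

theorem not_resiliently_reachable_of_g_pos {n m p : ℕ} (B : Matrix (Fin n) (Fin (m - p)) ℝ)
    (C : Matrix (Fin n) (Fin p) ℝ) (x₀ xgoal : Fin n → ℝ) (ε : ℝ) (hε : 0 ≤ ε)
    (hg : ∃ h : Fin n → ℝ, eNorm h = 1 ∧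
      0 < eNorm (Cᵀ.mulVec h) - eNorm (Bᵀ.mulVec h)) :
    ∃ tlim : ℝ, 0 ≤ tlim ∧ ∀ t : ℝ, tlim < t →
      ¬ ResilientlyReachableAt B C x₀ xgoal ε t := by
  obtain ⟨h, hh1, hgpos⟩ := hg
  set v := Cᵀ.mulVec h with hv_def
  set vb := Bᵀ.mulVec h with hvb_def
  set c := eNorm v with hc_def
  set b := eNorm vb with hb_def
  have hb0 : 0 ≤ b := eNorm_nonneg _
  have hc0 : 0 < c := by linarith
  set g := c - b with hgdef
  have hg0 : 0 < g := hgpos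
  set K := eNorm (x₀ - xgoal) with hK_def
  have hK0 : 0 ≤ K := eNorm_nonneg _
  refine ⟨((ε + K) / g) ^ 2, by positivity, fun T hT hreach => ?_⟩
  have hT0 : 0 < T := lt_of_le_of_lt (by positivity) hT
  set s := Real.sqrt T with hs_def
  have hs0 : 0 < s := Real.sqrt_pos.2 hT0
  have hsT : s ^ 2 = T := Real.sq_sqrt hT0.le
  have hvol : volume (Set.Ioc (0:ℝ) T) < ⊤ := by
    simp [Real.volume_Ioc]
  have hvolr : (volume (Set.Ioc (0:ℝ) T)).toReal = T := by
    simp [Real.volume_Ioc, ENNReal.toReal_ofReal hT0.le]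
  -- the adversarial input
  set w : ℝ → Fin p → ℝ := fun _ j => v j / (c * s) with hw_def
  have hw2 : (fun t => eNorm (w t) ^ 2) = fun _ : ℝ => 1 / T := by
    funext t
    rw [sq_eNorm]
    have e1 : ∑ j, (v j / (c * s)) ^ 2 = (∑ j, v j ^ 2) / (c * s) ^ 2 := by
      rw [Finset.sum_div]
      exact Finset.sum_congr rfl fun j _ => by ring
    show ∑ j, (v j / (c * s)) ^ 2 = 1 / T
    rw [e1, ← sq_eNorm, ← hc_def, mul_pow, hsT]
    field_simp
  have hwadm : Admissible T w := by
    refine ⟨measurable_const, ?_, ?_⟩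
    · rw [hw2]; exact integrableOn_const hvol.ne
    · rw [hw2]
      rw [setIntegral_const, smul_eq_mul, measureReal_def, hvolr]
      rw [mul_one_div, div_self hT0.ne']
  obtain ⟨u, ⟨humeas, huint, hunorm⟩, hfinal⟩ := hreach w hwadm
  have hconst : ∀ r : ℝ, IntegrableOn (fun _ : ℝ => r) (Set.Ioc 0 T) :=
    fun r => integrableOn_const hvol.ne
  have huI : IntegrableOn u (Set.Ioc 0 T) := by
    have h1 : IntegrableOn (fun t => eNorm (u t) ^ 2 + 1) (Set.Ioc 0 T) :=
      huint.add (hconst 1)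
    have h2 : IntegrableOn (fun t => (eNorm (u t) ^ 2 + 1) / 2) (Set.Ioc 0 T) := h1.div_const 2
    refine Integrable.mono' h2 humeas.aestronglyMeasurable
      (Filter.Eventually.of_forall fun t => ?_)
    calc ‖u t‖ ≤ eNorm (u t) := pi_norm_le_eNorm _
      _ ≤ (1 * eNorm (u t) ^ 2 + 1 / 1) / 2 := le_half one_pos
      _ = (eNorm (u t) ^ 2 + 1) / 2 := by norm_num
  set φ : ℝ → ℝ := fun t => ∑ j, vb j * u t j with hφ_def
  have hφint : IntegrableOn φ (Set.Ioc 0 T) := by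
    have h1 := (dotCLM vb).integrable_comp huI
    simp only [dotCLM_apply] at h1
    exact h1
  have hFint : IntegrableOn (fun t => B.mulVec (u t) + C.mulVec (w t)) (Set.Ioc 0 T) := by
    refine Integrable.add ?_ ?_
    · have h1 := (LinearMap.toContinuousLinearMap B.mulVecLin).integrable_comp huI
      simpa only [LinearMap.coe_toContinuousLinearMap', Matrix.mulVecLin_apply] using h1
    · have he : (fun t : ℝ => C.mulVec (w t)) = fun _ : ℝ => C.mulVec (fun j => v j / (c * s)) :=
        rfl
      rw [he]
      exact integrableOn_const hvol.ne
  set I : Fin n → ℝ := ∫ t in Set.Ioc (0:ℝ) T, (B.mulVec (u t) + C.mulVec (w t)) with hI_def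
  have hswap : dotCLM h I = ∫ t in Set.Ioc (0:ℝ) T, dotCLM h (B.mulVec (u t) + C.mulVec (w t)) :=
    (ContinuousLinearMap.integral_comp_comm _ hFint).symm
  have hpt : ∀ t, dotCLM h (B.mulVec (u t) + C.mulVec (w t)) = φ t + c / s := by
    intro t
    rw [dotCLM_apply]
    simp only [Pi.add_apply, mul_add, Finset.sum_add_distrib]
    rw [dot_mulVec h B (u t), dot_mulVec h C (w t)]
    congr 1
    have e2 : ∑ j, v j * (v j / (c * s)) = (∑ j, v j ^ 2) / (c * s) := by
      rw [Finset.sum_div]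
      exact Finset.sum_congr rfl fun j _ => by ring
    rw [← hv_def, e2, ← sq_eNorm, ← hc_def, sq]
    rw [mul_div_mul_left _ _ hc0.ne']
  -- lower bound the control contribution
  have hφlow : -(b * s) ≤ ∫ t in Set.Ioc (0:ℝ) T, φ t := by
    have hcm : IntegrableOn (fun t => (-(b * s / 2)) * eNorm (u t) ^ 2) (Set.Ioc 0 T) :=
      huint.const_mul _
    have hlbint : IntegrableOn (fun t => (-(b * s / 2)) * eNorm (u t) ^ 2 + (-(b / (2 * s))))
        (Set.Ioc 0 T) := hcm.add (hconst _)
    have hmono : ∫ t in Set.Ioc (0:ℝ) T, ((-(b * s / 2)) * eNorm (u t) ^ 2 + (-(b / (2 * s))))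
        ≤ ∫ t in Set.Ioc (0:ℝ) T, φ t := by
      refine setIntegral_mono_on hlbint hφint measurableSet_Ioc fun t _ => ?_
      have h1 : |φ t| ≤ b * eNorm (u t) := abs_dot_le vb (u t)
      have h2 : eNorm (u t) ≤ (s * eNorm (u t) ^ 2 + 1 / s) / 2 := le_half hs0
      have h4 : b * eNorm (u t) ≤ b * ((s * eNorm (u t) ^ 2 + 1 / s) / 2) :=
        mul_le_mul_of_nonneg_left h2 hb0
      have h5 : -(b * ((s * eNorm (u t) ^ 2 + 1 / s) / 2))
          = (-(b * s / 2)) * eNorm (u t) ^ 2 + (-(b / (2 * s))) := by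
        field_simp
        ring
      have h6 := neg_abs_le (φ t)
      have h7 := neg_le_neg h4
      rw [h5] at h7
      linarith
    have hval : ∫ t in Set.Ioc (0:ℝ) T, ((-(b * s / 2)) * eNorm (u t) ^ 2 + (-(b / (2 * s))))
        = (-(b * s / 2)) * (∫ t in Set.Ioc (0:ℝ) T, eNorm (u t) ^ 2) + T * (-(b / (2 * s))) := by
      rw [integral_add hcm (hconst _), integral_const_mul, setIntegral_const, smul_eq_mul, measureReal_def, hvolr]
    have hTs : T * (b / (2 * s)) = b * s / 2 := by
      rw [← hsT]; field_simp
    have hcoef : (-(b * s / 2)) * (∫ t in Set.Ioc (0:ℝ) T, eNorm (u t) ^ 2) ≥ -(b * s / 2) := by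
      have ha : -(b * s / 2) ≤ 0 := neg_nonpos.2 (by positivity)
      have h9 := mul_le_mul_of_nonpos_left hunorm ha
      rw [mul_one] at h9
      linarith
    rw [hval] at hmono
    nlinarith [hmono, hcoef, hTs]
  -- compute the full pairing
  have hpair : s * g ≤ dotCLM h I := by
    rw [hswap]
    have : (fun t => dotCLM h (B.mulVec (u t) + C.mulVec (w t))) = fun t => φ t + c / s :=
      funext hpt
    rw [this, integral_add hφint (hconst _),
      setIntegral_const, smul_eq_mul, measureReal_def, hvolr]
    have hTcs : T * (c / s) = s * c := by
      rw [← hsT]; field_simp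
    rw [hTcs]
    have : s * g = -(b * s) + s * c := by rw [hgdef]; ring
    linarith [hφlow]
  -- upper bound the pairing
  have hub1 : |dotCLM h (x₀ + I - xgoal)| ≤ ε := by
    rw [dotCLM_apply]
    have := abs_dot_le h (x₀ + I - xgoal)
    rw [hh1, one_mul] at this
    exact this.trans hfinal
  have hub2 : |dotCLM h (x₀ - xgoal)| ≤ K := by
    rw [dotCLM_apply]
    have := abs_dot_le h (x₀ - xgoal)
    rw [hh1, one_mul] at this
    exact this
  have hsplit : dotCLM h I = dotCLM h (x₀ + I - xgoal) - dotCLM h (x₀ - xgoal) := by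
    rw [map_sub, map_add, map_sub]; ring
  have hfin : s * g ≤ ε + K := by
    rw [hsplit] at hpair
    obtain ⟨a1, a2⟩ := abs_le.1 hub1
    obtain ⟨b1, b2⟩ := abs_le.1 hub2
    linarith
  -- conclude
  have hsle : s ≤ (ε + K) / g := (le_div_iff₀ hg0).2 (by linarith [mul_comm s g])
  have : T ≤ ((ε + K) / g) ^ 2 := by
    rw [← hsT]; exact pow_le_pow_left₀ hs0.le hsle 2
  linarith
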